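/- arXiv:2503.00400 — 4 statements merged into one kernel-verified Lean document; each statement's English description precedes it below -/
import Mathlib

section
/- Let v, n be unit vectors in R³ with v ≠ n, and let m⊥ = (v−n)/‖v−n‖. Then the function h₂(u) = (u·n)(u·v) − n·v on the unit sphere attains its minimum at u = ±m⊥, with minimum value −(1 + n·v)/2. -/
open Matrix Real

noncomputable def norm3 (v : Fin 3 → ℝ) : ℝ := Real.sqrt (v ⬝ᵥ v)

set_option maxHeartbeats 1000000 in
/-- for unit `v, n` with `v ≠ n` and `m⊥ = (v−n)/‖v−n‖`,
`h₂(u) = (u·n)(u·v) − n·v` attains its minimum `−(1 + n·v)/2` over the unit sphere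
at `u = ±m⊥`. -/
theorem stmt4 (v n : Fin 3 → ℝ) (hv : v ⬝ᵥ v = 1) (hn : n ⬝ᵥ n = 1)
    (hvn : v ≠ n) :
    let mp : Fin 3 → ℝ := (norm3 (v - n))⁻¹ • (v - n)
    (∀ u : Fin 3 → ℝ, u ⬝ᵥ u = 1 →
      -(1 + n ⬝ᵥ v) / 2 ≤ (u ⬝ᵥ n) * (u ⬝ᵥ v) - n ⬝ᵥ v) ∧
    (mp ⬝ᵥ n) * (mp ⬝ᵥ v) - n ⬝ᵥ v = -(1 + n ⬝ᵥ v) / 2 ∧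
    ((-mp) ⬝ᵥ n) * ((-mp) ⬝ᵥ v) - n ⬝ᵥ v = -(1 + n ⬝ᵥ v) / 2 := by
  intro mp
  obtain ⟨c, hc⟩ : ∃ c : ℝ, n ⬝ᵥ v = c := ⟨_, rfl⟩
  rw [hc]
  have hv' : v 0 * v 0 + v 1 * v 1 + v 2 * v 2 = 1 := by
    simpa [dotProduct, Fin.sum_univ_three] using hv
  have hn' : n 0 * n 0 + n 1 * n 1 + n 2 * n 2 = 1 := by
    simpa [dotProduct, Fin.sum_univ_three] using hn
  have hc' : c = n 0 * v 0 + n 1 * v 1 + n 2 * v 2 := by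
    rw [← hc]; simp [dotProduct, Fin.sum_univ_three]
  have hd : (v - n) ⬝ᵥ (v - n) = 2 - 2 * c := by
    simp only [dotProduct, Fin.sum_univ_three, Pi.sub_apply]
    nlinarith [hv', hn', hc']
  have hdpos : 0 < 2 - 2 * c := by
    have hge : (0:ℝ) ≤ 2 - 2 * c := by
      nlinarith [sq_nonneg (v 0 - n 0), sq_nonneg (v 1 - n 1), sq_nonneg (v 2 - n 2)]
    rcases hge.lt_or_eq with h | h
    · exact h
    · exfalso; apply hvn; funext i
      have h0' : (2:ℝ) - 2 * c = 0 := h.symm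
      have h0 : (v 0 - n 0)^2 + (v 1 - n 1)^2 + (v 2 - n 2)^2 = 0 := by
        nlinarith [hc', h0', hv', hn']
      have q0 := sq_nonneg (v 0 - n 0)
      have q1 := sq_nonneg (v 1 - n 1)
      have q2 := sq_nonneg (v 2 - n 2)
      have e0 : v 0 - n 0 = 0 := by
        have : (v 0 - n 0)^2 = 0 := by linarith
        exact pow_eq_zero_iff (by norm_num) |>.mp this
      have e1 : v 1 - n 1 = 0 := by
        have : (v 1 - n 1)^2 = 0 := by linarith
        exact pow_eq_zero_iff (by norm_num) |>.mp this
      have e2 : v 2 - n 2 = 0 := by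
        have : (v 2 - n 2)^2 = 0 := by linarith
        exact pow_eq_zero_iff (by norm_num) |>.mp this
      fin_cases i
      · exact sub_eq_zero.mp e0
      · exact sub_eq_zero.mp e1
      · exact sub_eq_zero.mp e2
  have hs : norm3 (v - n) = Real.sqrt (2 - 2 * c) := by rw [norm3, hd]
  have hspos : 0 < norm3 (v - n) := by rw [hs]; exact Real.sqrt_pos.mpr hdpos
  have hssq : norm3 (v - n) * norm3 (v - n) = 2 - 2 * c := by
    rw [hs]; exact Real.mul_self_sqrt (le_of_lt hdpos)
  have hmn : mp ⬝ᵥ n = (norm3 (v - n))⁻¹ * (c - 1) := by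
    show ((norm3 (v - n))⁻¹ • (v - n)) ⬝ᵥ n = _
    rw [smul_dotProduct, sub_dotProduct]
    have h1 : v ⬝ᵥ n = c := by
      rw [← hc]; simp [dotProduct, Fin.sum_univ_three]; ring
    rw [h1, hn, smul_eq_mul]
  have hmv : mp ⬝ᵥ v = (norm3 (v - n))⁻¹ * (1 - c) := by
    show ((norm3 (v - n))⁻¹ • (v - n)) ⬝ᵥ v = _
    rw [smul_dotProduct, sub_dotProduct]
    rw [hc, hv, smul_eq_mul]
  have key : (mp ⬝ᵥ n) * (mp ⬝ᵥ v) - c = -(1 + c) / 2 := by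
    rw [hmn, hmv]
    have hne : norm3 (v - n) ≠ 0 := ne_of_gt hspos
    field_simp
    nlinarith [hssq]
  refine ⟨?_, key, ?_⟩
  · intro u hu
    have hu' : u 0 * u 0 + u 1 * u 1 + u 2 * u 2 = 1 := by
      simpa [dotProduct, Fin.sum_univ_three] using hu
    have hww : (v 0 - n 0)^2 + (v 1 - n 1)^2 + (v 2 - n 2)^2 = 2 - 2 * c := by
      nlinarith [hv', hn', hc']
    obtain ⟨A, hA⟩ : ∃ a : ℝ, u 0 * (v 0 + n 0) + u 1 * (v 1 + n 1) + u 2 * (v 2 + n 2) = a :=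
      ⟨_, rfl⟩
    obtain ⟨B, hB⟩ : ∃ b : ℝ, u 0 * (v 0 - n 0) + u 1 * (v 1 - n 1) + u 2 * (v 2 - n 2) = b :=
      ⟨_, rfl⟩
    have hP : (u ⬝ᵥ n) * (u ⬝ᵥ v) = (A^2 - B^2) / 4 := by
      rw [← hA, ← hB]; simp only [dotProduct, Fin.sum_univ_three]; ring
    have hprod : (u 0 * u 0 + u 1 * u 1 + u 2 * u 2) *
        ((v 0 - n 0)^2 + (v 1 - n 1)^2 + (v 2 - n 2)^2) = 2 - 2 * c := by
      rw [hu', hww]; ring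
    have hBle : B^2 ≤ 2 - 2 * c := by
      rw [← hB]
      nlinarith [hprod, sq_nonneg (u 0 * (v 1 - n 1) - u 1 * (v 0 - n 0)),
        sq_nonneg (u 0 * (v 2 - n 2) - u 2 * (v 0 - n 0)),
        sq_nonneg (u 1 * (v 2 - n 2) - u 2 * (v 1 - n 1))]
    rw [hP]
    nlinarith [sq_nonneg A, hBle]

  · rw [neg_dotProduct, neg_dotProduct]
    calc (-(mp ⬝ᵥ n)) * (-(mp ⬝ᵥ v)) - c = (mp ⬝ᵥ n) * (mp ⬝ᵥ v) - c := by ring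
    _ = -(1 + c) / 2 := key
end

section
/- For unit vectors v, n in R³ and all unit vectors u, one has −(1 + n·v)/2 ≤ (u·n)(u·v) − n·v ≤ (1 − n·v)/2. -/
open Matrix Real

private lemma cs3 (u w : Fin 3 → ℝ) : (u ⬝ᵥ w) ^ 2 ≤ (u ⬝ᵥ u) * (w ⬝ᵥ w) := by
  simp only [dotProduct, Fin.sum_univ_three]
  nlinarith [sq_nonneg (u 0 * w 1 - u 1 * w 0), sq_nonneg (u 0 * w 2 - u 2 * w 0),
    sq_nonneg (u 1 * w 2 - u 2 * w 1)]

/-- for unit vectors `u, v, n` in ℝ³,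
`−(1 + n·v)/2 ≤ (u·n)(u·v) − n·v ≤ (1 − n·v)/2`. -/
theorem stmt5 (u v n : Fin 3 → ℝ) (hu : u ⬝ᵥ u = 1) (hv : v ⬝ᵥ v = 1)
    (hn : n ⬝ᵥ n = 1) :
    -(1 + n ⬝ᵥ v) / 2 ≤ (u ⬝ᵥ n) * (u ⬝ᵥ v) - n ⬝ᵥ v ∧
    (u ⬝ᵥ n) * (u ⬝ᵥ v) - n ⬝ᵥ v ≤ (1 - n ⬝ᵥ v) / 2 := by
  have h1 := cs3 u (n + v)
  have h2 := cs3 u (n - v)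
  have e1 : u ⬝ᵥ (n + v) = u ⬝ᵥ n + u ⬝ᵥ v := dotProduct_add u n v
  have e2 : u ⬝ᵥ (n - v) = u ⬝ᵥ n - u ⬝ᵥ v := dotProduct_sub u n v
  have e3 : (n + v) ⬝ᵥ (n + v) = n ⬝ᵥ n + n ⬝ᵥ v + (v ⬝ᵥ n + v ⬝ᵥ v) := by
    rw [add_dotProduct, dotProduct_add, dotProduct_add]
  have e4 : (n - v) ⬝ᵥ (n - v) = n ⬝ᵥ n - n ⬝ᵥ v - (v ⬝ᵥ n - v ⬝ᵥ v) := by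
    rw [sub_dotProduct, dotProduct_sub, dotProduct_sub]
  have e5 : v ⬝ᵥ n = n ⬝ᵥ v := dotProduct_comm v n
  rw [e1, e3, e5, hu, hn, hv] at h1
  rw [e2, e4, e5, hu, hn, hv] at h2
  constructor <;> nlinarith [sq_nonneg (u ⬝ᵥ n - u ⬝ᵥ v), sq_nonneg (u ⬝ᵥ n + u ⬝ᵥ v)]
end

section
/- Let v, n be unit vectors in R³ with v × n ≠ 0 and let c = (v×n)/‖v×n‖ have polar coordinates (α_k, φ_k), α_k ∈ (0,π). Suppose the rectangle C = [α_l, α_r] × [φ_l, φ_r] ⊆ (0,π) × [0,π] (with φ_k ∈ [0,π]) does not contain (α_k, φ_k). If (α_max, φ_max) maximizes (α,φ) ↦ sin α_k sin α cos(φ_k−φ) + cos α_k cos α over C, then φ_max = argmin_{φ ∈ [φ_l, φ_r]} |φ − φ_k|. -/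
open Matrix Real

/-- with `c = (v×n)/‖v×n‖` of polar coordinates `(α_k, φ_k)`, if the
rectangle `[α_l,α_r]×[φ_l,φ_r] ⊆ (0,π)×[0,π]` does not contain `(α_k,φ_k)`, then any
maximizer `(α_max, φ_max)` of `(α,φ) ↦ sin α_k sin α cos(φ_k−φ) + cos α_k cos α` over the
rectangle has `φ_max` equal to the point of `[φ_l,φ_r]` closest to `φ_k`. -/
theorem stmt14 (v n : Fin 3 → ℝ) (hv : v ⬝ᵥ v = 1) (hn : n ⬝ᵥ n = 1)
    (hvn : v ⨯₃ n ≠ 0)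
    (αk φk αl αr φl φr αmax φmax : ℝ)
    (hαk : αk ∈ Set.Ioo 0 π) (hφk : φk ∈ Set.Icc 0 π)
    (hc : (norm3 (v ⨯₃ n))⁻¹ • (v ⨯₃ n) =
      ![Real.sin αk * Real.cos φk, Real.sin αk * Real.sin φk, Real.cos αk])
    (hαl : 0 < αl) (hαlr : αl ≤ αr) (hαr : αr < π)
    (hφl : 0 ≤ φl) (hφlr : φl ≤ φr) (hφr : φr ≤ π)
    (hnotin : ¬(αk ∈ Set.Icc αl αr ∧ φk ∈ Set.Icc φl φr))
    (hmem : αmax ∈ Set.Icc αl αr ∧ φmax ∈ Set.Icc φl φr)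
    (hmax : ∀ α ∈ Set.Icc αl αr, ∀ φ ∈ Set.Icc φl φr,
      Real.sin αk * Real.sin α * Real.cos (φk - φ) + Real.cos αk * Real.cos α ≤
        Real.sin αk * Real.sin αmax * Real.cos (φk - φmax) + Real.cos αk * Real.cos αmax) :
    ∀ φ ∈ Set.Icc φl φr, |φmax - φk| ≤ |φ - φk| := by
  intro φ hφ
  obtain ⟨hα, hφm⟩ := hmem
  have hs : 0 < Real.sin αk := Real.sin_pos_of_pos_of_lt_pi hαk.1 hαk.2
  have hsm : 0 < Real.sin αmax :=
    Real.sin_pos_of_pos_of_lt_pi (lt_of_lt_of_le hαl hα.1) (lt_of_le_of_lt hα.2 hαr)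
  have h := hmax αmax hα φ hφ
  have hcos : Real.cos (φk - φ) ≤ Real.cos (φk - φmax) := by nlinarith [mul_pos hs hsm]
  by_contra hlt
  push_neg at hlt
  have h1 : |φ - φk| ∈ Set.Icc 0 π := ⟨abs_nonneg _, by
    rw [abs_sub_le_iff]
    constructor <;> nlinarith [hφ.1, hφ.2, hφk.1, hφk.2]⟩
  have h2 : |φmax - φk| ∈ Set.Icc 0 π := ⟨abs_nonneg _, by
    rw [abs_sub_le_iff]
    constructor <;> nlinarith [hφm.1, hφm.2, hφk.1, hφk.2]⟩
  have := Real.strictAntiOn_cos h1 h2 hlt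
  rw [Real.cos_abs, Real.cos_abs, ← Real.cos_neg (φ - φk), ← Real.cos_neg (φmax - φk)] at this
  simp only [neg_sub] at this
  linarith
end

section
/- Under the same setting, if (α_min, φ_min) minimizes (α,φ) ↦ sin α_k sin α cos(φ_k−φ) + cos α_k cos α over the rectangle C = [α_l, α_r] × [φ_l, φ_r] ⊆ (0,π) × [0,π], then φ_min = argmax_{φ ∈ [φ_l, φ_r]} |φ − φ_k|. -/
open Matrix Real

/-- under the same setting as Statement 14, any minimizer
`(α_min, φ_min)` of `(α,φ) ↦ sin α_k sin α cos(φ_k−φ) + cos α_k cos α` over the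
rectangle has `φ_min` equal to the point of `[φ_l,φ_r]` farthest from `φ_k`. -/
theorem stmt15 (v n : Fin 3 → ℝ) (hv : v ⬝ᵥ v = 1) (hn : n ⬝ᵥ n = 1)
    (hvn : v ⨯₃ n ≠ 0)
    (αk φk αl αr φl φr αmin φmin : ℝ)
    (hαk : αk ∈ Set.Ioo 0 π) (hφk : φk ∈ Set.Icc 0 π)
    (hc : (norm3 (v ⨯₃ n))⁻¹ • (v ⨯₃ n) =
      ![Real.sin αk * Real.cos φk, Real.sin αk * Real.sin φk, Real.cos αk])
    (hαl : 0 < αl) (hαlr : αl ≤ αr) (hαr : αr < π)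
    (hφl : 0 ≤ φl) (hφlr : φl ≤ φr) (hφr : φr ≤ π)
    (hnotin : ¬(αk ∈ Set.Icc αl αr ∧ φk ∈ Set.Icc φl φr))
    (hmem : αmin ∈ Set.Icc αl αr ∧ φmin ∈ Set.Icc φl φr)
    (hmin : ∀ α ∈ Set.Icc αl αr, ∀ φ ∈ Set.Icc φl φr,
      Real.sin αk * Real.sin αmin * Real.cos (φk - φmin) + Real.cos αk * Real.cos αmin ≤
        Real.sin αk * Real.sin α * Real.cos (φk - φ) + Real.cos αk * Real.cos α) :
    ∀ φ ∈ Set.Icc φl φr, |φ - φk| ≤ |φmin - φk| := by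
  intro φ hφ
  obtain ⟨hαm, hφm⟩ := hmem
  have hsk : 0 < Real.sin αk := Real.sin_pos_of_pos_of_lt_pi hαk.1 hαk.2
  have hsm : 0 < Real.sin αmin :=
    Real.sin_pos_of_pos_of_lt_pi (lt_of_lt_of_le hαl hαm.1) (lt_of_le_of_lt hαm.2 hαr)
  have h := hmin αmin hαm φ hφ
  have hcos : Real.cos (φk - φmin) ≤ Real.cos (φk - φ) := by
    have hpos : 0 < Real.sin αk * Real.sin αmin := mul_pos hsk hsm
    nlinarith [hpos]
  have h1 : |φk - φmin| ∈ Set.Icc 0 π := by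
    constructor
    · exact abs_nonneg _
    · rw [abs_le]
      constructor <;> [skip; skip] <;>
        cases' hφk with a b <;> cases' hφm with c d <;> nlinarith [hφl, hφr, hφlr]
  have h2 : |φk - φ| ∈ Set.Icc 0 π := by
    constructor
    · exact abs_nonneg _
    · rw [abs_le]
      constructor <;> [skip; skip] <;>
        cases' hφk with a b <;> cases' hφ with c d <;> nlinarith [hφl, hφr, hφlr]
  by_contra hlt
  push_neg at hlt
  have : |φmin - φk| < |φ - φk| := hlt
  have hlt' : |φk - φmin| < |φk - φ| := by rwa [abs_sub_comm φk φmin, abs_sub_comm φk φ]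
  have := Real.strictAntiOn_cos h1 h2 hlt'
  rw [Real.cos_abs, Real.cos_abs] at this
  linarith
end
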